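/- Let α : X → A and β : A → B be functors with β injective on objects, let C be a category, and let F : X → C be a functor. Suppose that for every functor G : A → C with G ∘ α = F there is a functor H_G : B → C, functorial in G (over the category of such G's and natural transformations between them commuting with the restriction to X), together with a natural isomorphism H_G ∘ β ≅ G natural in G. Then the restriction functor β_F^α from the category of functors B → C restricting along β∘α to F, to the category of functors A → C restricting along α to F, admits a right inverse functor (i.e., a functor s with β_F^α ∘ s = identity). -/

import Mathlib

open CategoryTheory

section Fib

variable {X A B C : Type*} [Category X] [Category A] [Category B] [Category C]

/-- The fibre category `A^α_F C`: functors `G : A ⥤ C` with `α ⋙ G = F`,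
with morphisms the natural transformations whose whiskering by `α` is the
identity on `F` (expressed via `eqToHom`). -/
def Fib (α : X ⥤ A) (F : X ⥤ C) : Type _ :=
  { G : A ⥤ C // α ⋙ G = F }

instance (α : X ⥤ A) (F : X ⥤ C) : Category (Fib α F) where
  Hom P Q := { m : P.1 ⟶ Q.1 // Functor.whiskerLeft α m = eqToHom (P.2.trans Q.2.symm) }
  id P := ⟨𝟙 P.1, by simp⟩
  comp f g := ⟨f.1 ≫ g.1, by rw [Functor.whiskerLeft_comp, f.2, g.2, eqToHom_trans]⟩
  id_comp f := Subtype.ext (by simp)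
  comp_id f := Subtype.ext (by simp)
  assoc f g h := Subtype.ext (by simp)

/-- The forgetful functor from the fibre category to the functor category. -/
def fibForget (α : X ⥤ A) (F : X ⥤ C) : Fib α F ⥤ (A ⥤ C) where
  obj P := P.1
  map m := m.1

/-- The restriction functor `β_F^α : B^{βα}_F C ⥤ A^α_F C`, precomposition with `β`. -/
def restrictFib (α : X ⥤ A) (β : A ⥤ B) (F : X ⥤ C) :
    Fib (α ⋙ β) F ⥤ Fib α F where
  obj H := ⟨β ⋙ H.1, by rw [← Functor.assoc]; exact H.2⟩
  map m := ⟨Functor.whiskerLeft β m.1, by rw [Functor.whiskerLeft_twice, m.2]; ext x; simp⟩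
  map_id H := Subtype.ext (by
    show Functor.whiskerLeft β (𝟙 H.1) = 𝟙 (β ⋙ H.1); simp)
  map_comp m m' := Subtype.ext (by
    show Functor.whiskerLeft β (m.1 ≫ m'.1) = Functor.whiskerLeft β m.1 ≫ Functor.whiskerLeft β m'.1; simp)

end Fib

section Aux
variable {X A B C : Type*} [Category X] [Category A] [Category B] [Category C]

lemma app_congr' {F1 F2 : A ⥤ C} (t : F1 ⟶ F2) {a a' : A} (h : a = a') :
    t.app a = eqToHom (by rw [h]) ≫ t.app a' ≫ eqToHom (by rw [h]) := by
  subst h; simp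

lemma comp_aux1 {p q r s t : C} (e : p ⟶ q) (u : q ⟶ r) (v : r ⟶ q) (g : q ⟶ s)
    (e' : s ⟶ t) (h : u ≫ v = 𝟙 q) : (e ≫ u) ≫ (v ≫ g) ≫ e' = e ≫ g ≫ e' := by
  simp [reassoc_of% h]

lemma comp_aux3 {p q1 q2 e1 e2 r t : C} (h : p ⟶ q1) (x : q1 ⟶ r) (j1 : e1 ≅ r)
    (y : r ⟶ t) (z : q1 ⟶ q2) (j2 : e2 ≅ q2) (w : q2 ⟶ t) {u : C} (k : t ⟶ u)
    (hxy : x ≫ y = z ≫ w) :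
    (h ≫ x ≫ j1.inv) ≫ (j1.hom ≫ y ≫ k) = (h ≫ z ≫ j2.inv) ≫ (j2.hom ≫ w ≫ k) := by
  simp [reassoc_of% hxy]

variable (α : X ⥤ A) (β : A ⥤ B) (F : X ⥤ C) (Hfun : Fib α F ⥤ (B ⥤ C))
variable (i : Hfun ⋙ (Functor.whiskeringLeft A B C).obj β ≅ fibForget α F)

open Classical in
noncomputable def extObj (G : Fib α F) (b : B) : C :=
  if h : ∃ a, β.obj a = b then G.1.obj h.choose else (Hfun.obj G).obj b

open Classical in
noncomputable def eIso (G : Fib α F) (b : B) :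
    extObj α β F Hfun G b ≅ (Hfun.obj G).obj b :=
  if h : ∃ a, β.obj a = b then
    eqToIso (dif_pos h) ≪≫ ((i.app G).app h.choose).symm ≪≫
      eqToIso (congrArg (Hfun.obj G).obj h.choose_spec)
  else eqToIso (dif_neg h)

lemma extObj_image (hβ : Function.Injective β.obj) (G : Fib α F) (a : A) :
    extObj α β F Hfun G (β.obj a) = G.1.obj a := by
  have h : ∃ a', β.obj a' = β.obj a := ⟨a, rfl⟩
  rw [extObj, dif_pos h]
  exact congrArg G.1.obj (hβ h.choose_spec)

lemma eIso_hom_image (hβ : Function.Injective β.obj) (G : Fib α F) (a : A) :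
    (eIso α β F Hfun i G (β.obj a)).hom =
      eqToHom (extObj_image α β F Hfun hβ G a) ≫ (i.inv.app G).app a := by
  have h : ∃ a', β.obj a' = β.obj a := ⟨a, rfl⟩
  have hc : h.choose = a := hβ h.choose_spec
  rw [eIso, dif_pos h]
  change eqToHom ((extObj_image α β F Hfun hβ G a).trans (congrArg G.1.obj hc.symm)) ≫
    (i.inv.app G).app h.choose ≫ eqToHom (congrArg (Hfun.obj G).obj h.choose_spec) = _
  have key : ∀ c (hc : c = a) (e1 : extObj α β F Hfun G (β.obj a) = G.1.obj c)
      (e2 : (Hfun.obj G).obj (β.obj c) = (Hfun.obj G).obj (β.obj a)),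
      eqToHom e1 ≫ (i.inv.app G).app c ≫ eqToHom e2 =
        eqToHom (extObj_image α β F Hfun hβ G a) ≫ (i.inv.app G).app a := by
    rintro c rfl e1 e2
    exact congrArg (fun t => eqToHom e1 ≫ t) (Category.comp_id ((i.inv.app G).app c))
  exact key _ hc _ _

lemma eIso_inv_image (hβ : Function.Injective β.obj) (G : Fib α F) (a : A) :
    (eIso α β F Hfun i G (β.obj a)).inv =
      (i.hom.app G).app a ≫ eqToHom (extObj_image α β F Hfun hβ G a).symm := by
  have h : ∃ a', β.obj a' = β.obj a := ⟨a, rfl⟩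
  have hc : h.choose = a := hβ h.choose_spec
  rw [eIso, dif_pos h]
  change (eqToHom (congrArg (Hfun.obj G).obj h.choose_spec).symm ≫ (i.hom.app G).app h.choose) ≫
    eqToHom ((extObj_image α β F Hfun hβ G a).trans (congrArg G.1.obj hc.symm)).symm = _
  have key : ∀ c (hc : c = a) (e1 : extObj α β F Hfun G (β.obj a) = G.1.obj c)
      (e2 : (Hfun.obj G).obj (β.obj c) = (Hfun.obj G).obj (β.obj a)),
      (eqToHom e2.symm ≫ (i.hom.app G).app c) ≫ eqToHom e1.symm =
        (i.hom.app G).app a ≫ eqToHom (extObj_image α β F Hfun hβ G a).symm := by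
    rintro c rfl e1 e2
    exact congrArg (fun t => t ≫ eqToHom e1.symm) (Category.id_comp ((i.hom.app G).app c))
  exact key _ hc ((extObj_image α β F Hfun hβ G a).trans (congrArg G.1.obj hc.symm))
    (congrArg (Hfun.obj G).obj h.choose_spec)

noncomputable def extFun (G : Fib α F) : B ⥤ C where
  obj b := extObj α β F Hfun G b
  map {b b'} f := (eIso α β F Hfun i G b).hom ≫ (Hfun.obj G).map f ≫
    (eIso α β F Hfun i G b').inv
  map_id b := by simp
  map_comp f g := by simp

lemma extFun_map {G : Fib α F} {b b' : B} (f : b ⟶ b') :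
    (extFun α β F Hfun i G).map f = (eIso α β F Hfun i G b).hom ≫
      (Hfun.obj G).map f ≫ (eIso α β F Hfun i G b').inv := rfl

lemma extFun_restrict (hβ : Function.Injective β.obj) (G : Fib α F) :
    β ⋙ extFun α β F Hfun i G = G.1 := by
  have hobj : ∀ a, (β ⋙ extFun α β F Hfun i G).obj a = G.1.obj a :=
    fun a => extObj_image α β F Hfun hβ G a
  refine CategoryTheory.Functor.ext hobj ?_
  intro a a' f
  show (extFun α β F Hfun i G).map (β.map f) = _
  rw [extFun_map, eIso_hom_image α β F Hfun i hβ, eIso_inv_image α β F Hfun i hβ]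
  have hn := (i.hom.app G).naturality f
  have hn' : (Hfun.obj G).map (β.map f) ≫ (i.hom.app G).app a' =
      (i.hom.app G).app a ≫ G.1.map f := hn
  have hii : (i.inv.app G).app a ≫ (i.hom.app G).app a = 𝟙 (G.1.obj a) := by
    rw [← Iso.app_inv, ← Iso.app_hom, Iso.inv_hom_id_app]; rfl
  rw [← Category.assoc ((Hfun.obj G).map (β.map f)), hn']
  exact comp_aux1 _ _ _ _ _ hii

noncomputable def extMap {G G' : Fib α F} (m : G ⟶ G') :
    extFun α β F Hfun i G ⟶ extFun α β F Hfun i G' where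
  app b := (eIso α β F Hfun i G b).hom ≫ (Hfun.map m).app b ≫
    (eIso α β F Hfun i G' b).inv
  naturality b b' f := by
    rw [extFun_map, extFun_map]
    exact comp_aux3 _ _ _ _ _ _ _ _ ((Hfun.map m).naturality f)

lemma extMap_app (hβ : Function.Injective β.obj) {G G' : Fib α F}
    (m : G ⟶ G') (a : A) :
    (extMap α β F Hfun i m).app (β.obj a) =
      eqToHom (extObj_image α β F Hfun hβ G a) ≫ m.1.app a ≫
        eqToHom (extObj_image α β F Hfun hβ G' a).symm := by
  show (eIso α β F Hfun i G (β.obj a)).hom ≫ (Hfun.map m).app (β.obj a) ≫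
      (eIso α β F Hfun i G' (β.obj a)).inv = _
  rw [eIso_hom_image α β F Hfun i hβ, eIso_inv_image α β F Hfun i hβ]
  have hn := NatTrans.congr_app (i.hom.naturality m) a
  have hn' : (Hfun.map m).app (β.obj a) ≫ (i.hom.app G').app a =
      (i.hom.app G).app a ≫ m.1.app a := hn
  simp only [reassoc_of% hn']
  have hii : (i.inv.app G).app a ≫ (i.hom.app G).app a = 𝟙 (G.1.obj a) := by
    rw [← Iso.app_inv, ← Iso.app_hom, Iso.inv_hom_id_app]; rfl
  exact comp_aux1 _ _ _ _ _ hii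

noncomputable def sFun (hβ : Function.Injective β.obj) :
    Fib α F ⥤ Fib (α ⋙ β) F where
  obj G := ⟨extFun α β F Hfun i G, by
    rw [Functor.assoc, extFun_restrict α β F Hfun i hβ]; exact G.2⟩
  map {G G'} m := ⟨extMap α β F Hfun i m, by
    ext x
    rw [Functor.whiskerLeft_app, eqToHom_app]
    show (extMap α β F Hfun i m).app (β.obj (α.obj x)) = _
    rw [extMap_app α β F Hfun i hβ]
    have hm := NatTrans.congr_app m.2 x
    rw [Functor.whiskerLeft_app, eqToHom_app] at hm
    rw [hm]
    simp
    rfl⟩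
  map_id G := Subtype.ext (by
    ext b
    show (eIso α β F Hfun i G b).hom ≫ (Hfun.map (𝟙 G)).app b ≫
      (eIso α β F Hfun i G b).inv = _
    simp
    rfl)
  map_comp {G G' G''} m m' := Subtype.ext (by
    ext b
    show (eIso α β F Hfun i G b).hom ≫ (Hfun.map (m ≫ m')).app b ≫
      (eIso α β F Hfun i G'' b).inv = ((extMap α β F Hfun i m) ≫
        (extMap α β F Hfun i m')).app b
    rw [NatTrans.comp_app]
    show _ = ((eIso α β F Hfun i G b).hom ≫ (Hfun.map m).app b ≫
      (eIso α β F Hfun i G' b).inv) ≫ ((eIso α β F Hfun i G' b).hom ≫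
        (Hfun.map m').app b ≫ (eIso α β F Hfun i G'' b).inv)
    rw [Hfun.map_comp, NatTrans.comp_app]
    slice_rhs 3 4 => rw [Iso.inv_hom_id]
    simp)

lemma fib_eqToHom_val {α : X ⥤ A} {F : X ⥤ C} {P Q : Fib α F} (h : P = Q) :
    (eqToHom h).1 = eqToHom (congrArg Subtype.val h) := by
  subst h; rfl

end Aux

/-- Lemma (LemA): if every `G` in the fibre `A^α_F C` admits an extension `H_G : B ⥤ C`,
functorially in `G`, together with a natural isomorphism `β ⋙ H_G ≅ G` natural in `G`,
then the restriction functor `β_F^α` admits a (strict) right inverse functor. -/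
theorem statement1 {X A B C : Type*} [Category X] [Category A] [Category B] [Category C]
    (α : X ⥤ A) (β : A ⥤ B) (hβ : Function.Injective β.obj) (F : X ⥤ C)
    (Hfun : Fib α F ⥤ (B ⥤ C))
    (i : Hfun ⋙ (Functor.whiskeringLeft A B C).obj β ≅ fibForget α F) :
    ∃ s : Fib α F ⥤ Fib (α ⋙ β) F, s ⋙ restrictFib α β F = 𝟭 (Fib α F) := by
  refine ⟨sFun α β F Hfun i hβ, ?_⟩
  have hobj : ∀ G : Fib α F, (sFun α β F Hfun i hβ ⋙ restrictFib α β F).obj G =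
      (𝟭 (Fib α F)).obj G :=
    fun G => Subtype.ext (extFun_restrict α β F Hfun i hβ G)
  refine CategoryTheory.Functor.ext hobj ?_
  intro G G' m
  apply Subtype.ext
  show Functor.whiskerLeft β (extMap α β F Hfun i m) =
    (eqToHom (hobj G) ≫ m ≫ eqToHom (hobj G').symm).1
  rw [show (eqToHom (hobj G) ≫ m ≫ eqToHom (hobj G').symm).1
      = (eqToHom (hobj G)).1 ≫ m.1 ≫ (eqToHom (hobj G').symm).1 from rfl,
    fib_eqToHom_val, fib_eqToHom_val]
  ext a
  rw [Functor.whiskerLeft_app, extMap_app α β F Hfun i hβ]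
  simp [eqToHom_app]
  rfl
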